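/- If f : ℝ → ℝ satisfies Cauchy's functional equation and is not of the form f(x) = c·x for any constant c, then the graph of f, i.e. {(x, f(x)) : x ∈ ℝ}, is dense in ℝ². -/

import Mathlib

theorem cauchy_nonlinear_dense_graph
    (f : ℝ → ℝ) (hf : ∀ x y : ℝ, f (x + y) = f x + f y)
    (hnl : ¬ ∃ c : ℝ, ∀ x : ℝ, f x = c * x) :
    Dense (Set.range fun x : ℝ => (x, f x)) := by
  push_neg at hnl
  obtain ⟨a, ha⟩ := hnl (f 1)
  set F : ℝ →+ ℝ := AddMonoidHom.mk' f hf with hF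
  have hq : ∀ (q : ℚ) (x : ℝ), f ((q : ℝ) * x) = (q : ℝ) * f x := by
    intro q x
    have := map_rat_smul F q x
    simpa [Rat.smul_def, hF] using this
  have hd : f a - f 1 * a ≠ 0 := sub_ne_zero.mpr ha
  rw [Metric.dense_iff]
  intro p ε hε
  set C : ℝ := 1 + |a| + |f 1| + |f a| with hCdef
  have hC : 0 < C := by positivity
  set δ := ε / (4 * C) with hδdef
  have hδ : 0 < δ := by positivity
  set d := f a - f 1 * a with hdd
  set α := (p.1 * f a - p.2 * a) / d with hα
  set β := (p.2 - p.1 * f 1) / d with hβ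
  obtain ⟨q₁, hq₁⟩ := exists_rat_near α hδ
  obtain ⟨q₂, hq₂⟩ := exists_rat_near β hδ
  refine ⟨((q₁ : ℝ) + q₂ * a, f ((q₁ : ℝ) + q₂ * a)), ?_, ⟨_, rfl⟩⟩
  have hfv : f ((q₁ : ℝ) + (q₂ : ℝ) * a) = q₁ * f 1 + q₂ * f a := by
    rw [hf]
    congr 1
    · simpa using hq q₁ 1
    · exact hq q₂ a
  have h1 : α + β * a = p.1 := by
    rw [hα, hβ, hdd]
    have hd' : f a - f 1 * a ≠ 0 := hd
    rw [div_mul_eq_mul_div, ← add_div, div_eq_iff hd']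
    ring
  have h2 : α * f 1 + β * f a = p.2 := by
    rw [hα, hβ, hdd]
    have hd' : f a - f 1 * a ≠ 0 := hd
    rw [div_mul_eq_mul_div, div_mul_eq_mul_div, ← add_div, div_eq_iff hd']
    ring
  have e1 : |(q₁ : ℝ) - α| < δ := by rw [abs_sub_comm]; exact hq₁
  have e2 : |(q₂ : ℝ) - β| < δ := by rw [abs_sub_comm]; exact hq₂
  clear_value α β d δ C
  have key : ∀ u v : ℝ, |u| ≤ 1 + |a| + |f 1| + |f a| → |v| ≤ 1 + |a| + |f 1| + |f a| →
      |((q₁ : ℝ) - α) * u + ((q₂ : ℝ) - β) * v| < ε := by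
    intro u v hu hv
    have t1 : |(q₁ : ℝ) - α| * |u| ≤ δ * C :=
      mul_le_mul e1.le (hCdef ▸ hu) (abs_nonneg _) hδ.le
    have t2 : |(q₂ : ℝ) - β| * |v| ≤ δ * C :=
      mul_le_mul e2.le (hCdef ▸ hv) (abs_nonneg _) hδ.le
    have hsum : |((q₁ : ℝ) - α) * u + ((q₂ : ℝ) - β) * v|
        ≤ |(q₁ : ℝ) - α| * |u| + |(q₂ : ℝ) - β| * |v| := by
      refine (abs_add_le _ _).trans ?_
      simp [abs_mul, le_refl]
    have hεhalf : δ * C + δ * C = ε / 2 := by rw [hδdef]; field_simp; ring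
    linarith
  rw [Metric.mem_ball, Prod.dist_eq]
  have hball1 : dist ((q₁ : ℝ) + (q₂ : ℝ) * a) p.1 < ε := by
    rw [Real.dist_eq]
    have : (q₁ : ℝ) + (q₂ : ℝ) * a - p.1
        = ((q₁ : ℝ) - α) * 1 + ((q₂ : ℝ) - β) * a := by
      rw [← h1]; ring
    rw [this]
    refine key 1 a ?_ ?_
    · have h1' := abs_nonneg (f 1); have h2' := abs_nonneg (f a); have h3' := abs_nonneg a
      rw [abs_one]; linarith
    · have h1' := abs_nonneg (f 1); have h2' := abs_nonneg (f a)
      linarith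
  have hball2 : dist (f ((q₁ : ℝ) + (q₂ : ℝ) * a)) p.2 < ε := by
    rw [Real.dist_eq, hfv]
    have : (q₁ : ℝ) * f 1 + (q₂ : ℝ) * f a - p.2
        = ((q₁ : ℝ) - α) * f 1 + ((q₂ : ℝ) - β) * f a := by
      rw [← h2]; ring
    rw [this]
    refine key (f 1) (f a) ?_ ?_
    · have h1' := abs_nonneg a; have h2' := abs_nonneg (f a); linarith
    · have h1' := abs_nonneg a; have h2' := abs_nonneg (f 1); linarith
  exact max_lt hball1 hball2
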